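/- The set of fully k-rooted cuttable k-permutations is a k-permutation class: for every fully k-rooted cuttable k-permutation σ of degree n and every nonempty subset L ⊆ {1,…,n}, the restriction σ^{|L} is fully k-rooted cuttable. -/

import Mathlib

/-- `σ` is a `k`-permutation of degree `n`: a word over the alphabet `{1, …, n}`
in which every value `i ∈ {1, …, n}` occurs exactly `k` times (and no other
letter occurs). -/
def IsMultiPerm (k n : ℕ) (σ : List ℕ) : Prop :=
  ∀ i : ℕ, σ.count i = if 1 ≤ i ∧ i ≤ n then k else 0

/-- The restriction `σ^{|L}` of a multipermutation `σ` to a set `L` of values: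
delete all letters whose value is not in `L`, and replace, for each `x`, the
`x`-th smallest element of `L` by `x`. -/
def restrict (σ : List ℕ) (L : Finset ℕ) : List ℕ :=
  (σ.filter fun x => decide (x ∈ L)).map fun x => (L.filter fun y => y ≤ x).card

/-- `γ` is a `k`-rooted cut of the `k`-permutation `σ` of degree `n`:
`1 ≤ γ ≤ n - 1` and `σ = μ·ν·ω` where `μ` consists of the first `k` letters of
`σ` and `ν`, `ω` are words such that every letter of `ν` is at most `γ` and
every letter of `ω` is greater than `γ`. -/
def IsKRootedCut (k n : ℕ) (σ : List ℕ) (γ : ℕ) : Prop :=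
  1 ≤ γ ∧ γ ≤ n - 1 ∧
    ∃ μ ν ω : List ℕ,
      σ = μ ++ ν ++ ω ∧ μ.length = k ∧ (∀ x ∈ ν, x ≤ γ) ∧ (∀ x ∈ ω, γ < x)

/-- A `k`-permutation of degree `n` is `k`-rooted cuttable if it has a
`k`-rooted cut. -/
def KRootedCuttable (k n : ℕ) (σ : List ℕ) : Prop :=
  ∃ γ, IsKRootedCut k n σ γ

/-- A `k`-permutation of degree `n` is fully `k`-rooted cuttable if its
restriction to every interval `{a, …, b} ⊆ {1, …, n}` with `a < b` is
`k`-rooted cuttable. -/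
def FullyKRootedCuttable (k n : ℕ) (σ : List ℕ) : Prop :=
  ∀ a b : ℕ, 1 ≤ a → a < b → b ≤ n →
    KRootedCuttable k (Finset.Icc a b).card (restrict σ (Finset.Icc a b))

/-- rank function -/
def rk (L : Finset ℕ) (x : ℕ) : ℕ := (L.filter fun y => y ≤ x).card

lemma rk_mono (L : Finset ℕ) {x y : ℕ} (h : x ≤ y) : rk L x ≤ rk L y := by
  apply Finset.card_le_card
  intro z hz
  rw [Finset.mem_filter] at hz ⊢
  exact ⟨hz.1, le_trans hz.2 h⟩

lemma rk_lt_rk {L : Finset ℕ} {x y : ℕ} (hy : y ∈ L) (h : x < y) : rk L x < rk L y := by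
  apply Finset.card_lt_card
  constructor
  · intro z hz
    rw [Finset.mem_filter] at hz ⊢
    exact ⟨hz.1, le_trans hz.2 h.le⟩
  · intro hsub
    have := hsub (Finset.mem_filter.2 ⟨hy, le_refl y⟩)
    have := (Finset.mem_filter.1 this).2
    omega

lemma rk_pos {L : Finset ℕ} {x : ℕ} (hx : x ∈ L) : 1 ≤ rk L x := by
  have : x ∈ L.filter fun y => y ≤ x := Finset.mem_filter.2 ⟨hx, le_refl x⟩
  exact Finset.card_pos.2 ⟨x, this⟩

lemma rk_le_card (L : Finset ℕ) (x : ℕ) : rk L x ≤ L.card :=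
  Finset.card_le_card (Finset.filter_subset _ _)

lemma rk_injOn (L : Finset ℕ) : Set.InjOn (rk L) L := by
  intro x hx y hy h
  by_contra hne
  rcases lt_or_gt_of_ne hne with hlt | hlt
  · exact absurd h (Nat.ne_of_lt (rk_lt_rk hy hlt))
  · exact absurd h.symm (Nat.ne_of_lt (rk_lt_rk hx hlt))

lemma rk_image (L : Finset ℕ) : L.image (rk L) = Finset.Icc 1 L.card := by
  apply Finset.eq_of_subset_of_card_le
  · intro s hs
    rcases Finset.mem_image.1 hs with ⟨x, hx, rfl⟩
    exact Finset.mem_Icc.2 ⟨rk_pos hx, rk_le_card L x⟩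
  · rw [Finset.card_image_of_injOn (rk_injOn L), Nat.card_Icc]
    omega

lemma rk_surj {L : Finset ℕ} {s : ℕ} (h1 : 1 ≤ s) (h2 : s ≤ L.card) :
    ∃ x ∈ L, rk L x = s := by
  have : s ∈ L.image (rk L) := by
    rw [rk_image]; exact Finset.mem_Icc.2 ⟨h1, h2⟩
  rcases Finset.mem_image.1 this with ⟨x, hx, hxe⟩
  exact ⟨x, hx, hxe⟩

lemma rk_comp {L S : Finset ℕ} (hS : S ⊆ Finset.Icc 1 L.card) {x : ℕ} (hx : x ∈ L) :
    rk (L.filter fun y => rk L y ∈ S) x = rk S (rk L x) := by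
  show ((L.filter fun y => rk L y ∈ S).filter fun y => y ≤ x).card
      = (S.filter fun s => s ≤ rk L x).card
  apply Finset.card_bij (fun y _ => rk L y)
  · intro y hy
    simp only [Finset.mem_filter] at hy ⊢
    exact ⟨hy.1.2, rk_mono L hy.2⟩
  · intro y hy z hz h
    simp only [Finset.mem_filter] at hy hz
    exact rk_injOn L hy.1.1 hz.1.1 h
  · intro s hs
    simp only [Finset.mem_filter] at hs
    have hs1 := hS hs.1
    rw [Finset.mem_Icc] at hs1
    rcases rk_surj hs1.1 hs1.2 with ⟨y, hyL, hye⟩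
    refine ⟨y, ?_, hye⟩
    simp only [Finset.mem_filter]
    refine ⟨⟨hyL, by rw [hye]; exact hs.1⟩, ?_⟩
    by_contra hc
    push_neg at hc
    have := rk_lt_rk hyL hc
    omega

lemma restrict_restrict (σ : List ℕ) (L S : Finset ℕ) (hS : S ⊆ Finset.Icc 1 L.card) :
    restrict (restrict σ L) S = restrict σ (L.filter fun x => rk L x ∈ S) := by
  unfold restrict
  rw [List.filter_map, List.map_map, List.filter_filter]
  have hpred : ∀ a ∈ σ,
      (((fun x => decide (x ∈ S)) ∘ fun x => (L.filter fun y => y ≤ x).card) a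
        && decide (a ∈ L))
      = decide (a ∈ L.filter fun x => rk L x ∈ S) := by
    intro a _
    simp only [Function.comp, Finset.mem_filter]
    by_cases h1 : a ∈ L <;> by_cases h2 : (L.filter fun y => y ≤ a).card ∈ S <;> simp [h1, h2, rk]
  rw [List.filter_congr hpred]
  apply List.map_congr_left
  intro a ha
  simp only [List.mem_filter, decide_eq_true_eq] at ha
  rw [Finset.mem_filter] at ha
  have := rk_comp hS ha.2.1
  unfold rk at this
  exact this.symm

lemma cut_restrict {k m : ℕ} {τ : List ℕ} {γ : ℕ} (h : IsKRootedCut k m τ γ)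
    (S : Finset ℕ) (hlow : ∃ s ∈ S, s ≤ γ) (hhigh : ∃ s ∈ S, γ < s)
    (hlen : k ≤ (restrict τ S).length) :
    KRootedCuttable k S.card (restrict τ S) := by
  obtain ⟨hγ1, hγ2, μ, ν, ω, hτ, hμ, hν, hω⟩ := h
  set γ' := (S.filter fun s => s ≤ γ).card with hγ'
  refine ⟨γ', ?_, ?_, ?_⟩
  · obtain ⟨s, hsS, hs⟩ := hlow
    exact Finset.card_pos.2 ⟨s, Finset.mem_filter.2 ⟨hsS, hs⟩⟩
  · obtain ⟨s, hsS, hs⟩ := hhigh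
    have hlt : γ' < S.card := by
      apply Finset.card_lt_card
      constructor
      · exact Finset.filter_subset _ _
      · intro hsub
        have := Finset.mem_filter.1 (hsub hsS)
        omega
    omega
  · -- decomposition
    have hR : restrict τ S =
        restrict μ S ++ restrict ν S ++ restrict ω S := by
      simp [restrict, hτ, List.filter_append, List.map_append]
    set A := restrict μ S
    set B := restrict ν S
    set C := restrict ω S
    have hA : A.length ≤ k := by
      have : A.length ≤ μ.length := by
        simpa [A, restrict] using List.length_filter_le _ μ
      omega
    have hγ'' : γ' = rk S γ := rfl
    have hB : ∀ x ∈ B, x ≤ γ' := by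
      intro x hx
      simp only [B, restrict, List.mem_map, List.mem_filter, decide_eq_true_eq] at hx
      obtain ⟨v, ⟨hv1, hv2⟩, rfl⟩ := hx
      exact rk_mono S (hν v hv1)
    have hC : ∀ x ∈ C, γ' < x := by
      intro x hx
      simp only [C, restrict, List.mem_map, List.mem_filter, decide_eq_true_eq] at hx
      obtain ⟨v, ⟨hv1, hv2⟩, rfl⟩ := hx
      exact rk_lt_rk hv2 (hω v hv1)
    refine ⟨(restrict τ S).take k,
      B.drop (k - A.length), C.drop (k - A.length - B.length), ?_, ?_, ?_, ?_⟩
    · conv_lhs => rw [← List.take_append_drop k (restrict τ S)]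
      rw [List.append_assoc]
      congr 1
      rw [hR, List.append_assoc, List.drop_append,
        List.drop_append, List.drop_eq_nil_of_le hA, List.nil_append]
    · rw [List.length_take]
      omega
    · intro x hx
      exact hB x (List.mem_of_mem_drop hx)
    · intro x hx
      exact hC x (List.mem_of_mem_drop hx)

lemma length_restrict_ge {k n : ℕ} (σ : List ℕ) (hσ : IsMultiPerm k n σ)
    {L : Finset ℕ} {x : ℕ} (hx : x ∈ L) (h1 : 1 ≤ x) (h2 : x ≤ n) :
    k ≤ (restrict σ L).length := by
  have hcnt : σ.count x = k := by rw [hσ x]; simp [h1, h2]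
  have h1' : σ.count x ≤ σ.countP (fun y => decide (y ∈ L)) := by
    rw [List.count]
    apply List.countP_mono_left
    intro a _ ha
    simp only [beq_iff_eq] at ha
    subst ha
    simpa using hx
  rw [hcnt, List.countP_eq_length_filter] at h1'
  simpa [restrict] using h1'

lemma restrict_cuttable {k n : ℕ} (σ : List ℕ) (hσ : IsMultiPerm k n σ)
    (hfull : FullyKRootedCuttable k n σ) (L' : Finset ℕ) (hcard : 2 ≤ L'.card)
    (hsub : L' ⊆ Finset.Icc 1 n) :
    KRootedCuttable k L'.card (restrict σ L') := by
  have hne : L'.Nonempty := Finset.card_pos.1 (by omega)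
  set m := L'.min' hne with hm
  set M := L'.max' hne with hM
  have hmM : m < M := Finset.min'_lt_max'_of_card L' (by omega)
  have hmem : m ∈ L' := Finset.min'_mem _ _
  have hMem : M ∈ L' := Finset.max'_mem _ _
  have hm1 : 1 ≤ m := (Finset.mem_Icc.1 (hsub hmem)).1
  have hMn : M ≤ n := (Finset.mem_Icc.1 (hsub hMem)).2
  set I := Finset.Icc m M with hI
  have hL'I : L' ⊆ I := fun x hx =>
    Finset.mem_Icc.2 ⟨Finset.min'_le _ _ hx, Finset.le_max' _ _ hx⟩
  have hIcard : I.card = M - m + 1 := by rw [hI, Nat.card_Icc]; omega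
  obtain ⟨γ, hcut⟩ := hfull m M hm1 hmM hMn
  set S := L'.image (rk I) with hS
  have hSsub : S ⊆ Finset.Icc 1 I.card := by
    intro s hs
    rcases Finset.mem_image.1 hs with ⟨x, hx, rfl⟩
    exact Finset.mem_Icc.2 ⟨rk_pos (hL'I hx), rk_le_card _ _⟩
  have hfilter : (I.filter fun x => rk I x ∈ S) = L' := by
    ext x
    simp only [Finset.mem_filter, hS, Finset.mem_image]
    constructor
    · rintro ⟨hxI, y, hyL, hye⟩
      have := rk_injOn I (hL'I hyL) hxI hye
      rwa [← this]
    · intro hx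
      exact ⟨hL'I hx, x, hx, rfl⟩
  have hrr := restrict_restrict σ I S hSsub
  rw [hfilter] at hrr
  have hcards : S.card = L'.card := Finset.card_image_of_injOn ((rk_injOn I).mono hL'I)
  -- low and high witnesses
  have hrkm : rk I m = 1 := by
    have : I.filter (fun y => y ≤ m) = {m} := by
      ext y
      simp only [Finset.mem_filter, hI, Finset.mem_Icc, Finset.mem_singleton]
      omega
    rw [rk, this, Finset.card_singleton]
  have hrkM : rk I M = I.card := by
    rw [rk, Finset.filter_true_of_mem]
    intro y hy
    exact (Finset.mem_Icc.1 hy).2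
  have hlow : ∃ s ∈ S, s ≤ γ := by
    refine ⟨rk I m, Finset.mem_image_of_mem _ hmem, ?_⟩
    rw [hrkm]; exact hcut.1
  have hhigh : ∃ s ∈ S, γ < s := by
    refine ⟨rk I M, Finset.mem_image_of_mem _ hMem, ?_⟩
    have h1 := hcut.2.1
    rw [hrkM, hIcard]
    rw [hIcard] at h1
    omega
  have hlen : k ≤ (restrict (restrict σ I) S).length := by
    rw [hrr]
    exact length_restrict_ge σ hσ hmem hm1 (le_trans hmM.le hMn)
  have := cut_restrict hcut S hlow hhigh hlen
  rwa [hrr, hcards] at this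

/-- The set of fully `k`-rooted cuttable `k`-permutations is a `k`-permutation
class: any restriction of a fully `k`-rooted cuttable `k`-permutation is fully
`k`-rooted cuttable. -/
theorem fullyKRootedCuttable_restrict (k n : ℕ) (hk : 1 ≤ k) (hn : 1 ≤ n)
    (σ : List ℕ) (hσ : IsMultiPerm k n σ) (hfull : FullyKRootedCuttable k n σ)
    (L : Finset ℕ) (hL : L.Nonempty) (hLsub : L ⊆ Finset.Icc 1 n) :
    FullyKRootedCuttable k L.card (restrict σ L) := by
  intro a b ha hab hbL
  have hSsub : Finset.Icc a b ⊆ Finset.Icc 1 L.card := by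
    intro s hs
    rw [Finset.mem_Icc] at hs ⊢
    omega
  have hrr := restrict_restrict σ L (Finset.Icc a b) hSsub
  set L'' := L.filter fun x => rk L x ∈ Finset.Icc a b with hL''
  have himg : L''.image (rk L) = Finset.Icc a b := by
    ext s
    simp only [Finset.mem_image, hL'', Finset.mem_filter]
    constructor
    · rintro ⟨x, ⟨_, hx2⟩, rfl⟩
      exact hx2
    · intro hs
      have hs' := hSsub hs
      rw [Finset.mem_Icc] at hs'
      rcases rk_surj hs'.1 hs'.2 with ⟨x, hxL, hxe⟩
      exact ⟨x, ⟨hxL, hxe ▸ hs⟩, hxe⟩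
  have hcard : L''.card = (Finset.Icc a b).card := by
    rw [← himg,
      Finset.card_image_of_injOn ((rk_injOn L).mono (Finset.filter_subset _ _))]
  rw [hrr, ← hcard]
  apply restrict_cuttable σ hσ hfull L''
  · rw [hcard, Nat.card_Icc]; omega
  · exact fun x hx => hLsub (Finset.filter_subset _ _ hx)
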